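/- Let n ≥ 2 be an integer, k an integer, and x₁, x₂ complex numbers with x₂ ≠ 0. If π(x₁, x₂) lies on the ray B_{2k}, then x₁ = x₂·e^{2πik/n}, and consequently the two sets {e^{2πij/n}·x₁ : 0 ≤ j < n} and {e^{2πij/n}·x₂ : 0 ≤ j < n} coincide (the two regular n-gons fit together, forcing collisions of the corresponding bodies). -/

import Mathlib

open Real

/-- The map `π : ℂ × ℂ → ℝ³`,
`π(x₁,x₂) = (|x₁|² − |x₂|², 2 Re(x₁ x̄₂), 2 Im(x₁ x̄₂))`. -/
noncomputable def piMap (x : ℂ × ℂ) : Fin 3 → ℝ :=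
  ![‖x.1‖ ^ 2 - ‖x.2‖ ^ 2,
    2 * (x.1 * (starRingEnd ℂ) x.2).re,
    2 * (x.1 * (starRingEnd ℂ) x.2).im]

/-- The ray `B_m = {(0, s·cos(mπ/n), s·sin(mπ/n)) : s > 0} ⊂ ℝ³`. -/
noncomputable def Bray (n : ℕ) (m : ℤ) : Set (Fin 3 → ℝ) :=
  {v | ∃ s : ℝ, 0 < s ∧ v = ![0, s * Real.cos (m * π / n), s * Real.sin (m * π / n)]}

lemma aux_exp_int (n : ℕ) (hn : 0 < n) (m : ℤ) :
    Complex.exp (2 * (π : ℂ) * Complex.I * (m : ℂ) / (n : ℂ)) =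
      Complex.exp (2 * (π : ℂ) * Complex.I / (n : ℂ)) ^ m := by
  rw [← Complex.exp_int_mul]
  congr 1
  ring

lemma aux_zeta_pow_n (n : ℕ) (hn : 0 < n) :
    Complex.exp (2 * (π : ℂ) * Complex.I / (n : ℂ)) ^ (n : ℤ) = 1 := by
  rw [← Complex.exp_int_mul]
  have hn' : (n : ℂ) ≠ 0 := Nat.cast_ne_zero.mpr hn.ne'
  have : (n : ℤ) * (2 * (π : ℂ) * Complex.I / (n : ℂ)) = 2 * (π : ℂ) * Complex.I := by
    push_cast
    field_simp
  rw [this, Complex.exp_two_pi_mul_I]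

lemma aux_zeta_mod (n : ℕ) (hn : 0 < n) (m : ℤ) :
    Complex.exp (2 * (π : ℂ) * Complex.I / (n : ℂ)) ^ m =
      Complex.exp (2 * (π : ℂ) * Complex.I / (n : ℂ)) ^ (m % (n : ℤ)) := by
  set ζ := Complex.exp (2 * (π : ℂ) * Complex.I / (n : ℂ)) with hζ
  have hz : ζ ≠ 0 := Complex.exp_ne_zero _
  conv_lhs => rw [← Int.emod_add_mul_ediv m (n : ℤ)]
  rw [zpow_add₀ hz, zpow_mul, aux_zeta_pow_n n hn, one_zpow, mul_one]

/-- If `π(x₁,x₂)` lies on the ray `B_{2k}`, then `x₁ = x₂·e^{2πik/n}` and the two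
regular `n`-gons `{e^{2πij/n}x₁ : 0 ≤ j < n}` and `{e^{2πij/n}x₂ : 0 ≤ j < n}`
coincide. -/
theorem piMap_mem_Bray_even (n : ℕ) (hn : 2 ≤ n) (k : ℤ) (x₁ x₂ : ℂ) (hx₂ : x₂ ≠ 0)
    (h : piMap (x₁, x₂) ∈ Bray n (2 * k)) :
    x₁ = x₂ * Complex.exp (2 * (π : ℂ) * Complex.I * (k : ℂ) / (n : ℂ)) ∧
    {z : ℂ | ∃ j : ℕ, j < n ∧ z = Complex.exp (2 * (π : ℂ) * Complex.I * (j : ℂ) / (n : ℂ)) * x₁}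
      = {z : ℂ | ∃ j : ℕ, j < n ∧ z = Complex.exp (2 * (π : ℂ) * Complex.I * (j : ℂ) / (n : ℂ)) * x₂} := by
  have hn0 : 0 < n := by omega
  obtain ⟨s, hs, hv⟩ := h
  set θ : ℝ := (2 * k : ℤ) * π / n with hθ
  have h0 := congrFun hv 0
  have h1 := congrFun hv 1
  have h2 := congrFun hv 2
  simp [piMap] at h0 h1 h2
  -- x₁ * conj x₂ = (s/2) * exp(θ I)
  have hprod : x₁ * (starRingEnd ℂ) x₂ = ((s / 2 : ℝ) : ℂ) * Complex.exp ((θ : ℂ) * Complex.I) := by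
    rw [Complex.exp_mul_I]
    apply Complex.ext <;>
      simp [← Complex.ofReal_cos, ← Complex.ofReal_sin] <;> linarith
  -- moduli
  have h0' : ‖x₁‖ = ‖x₂‖ := by
    nlinarith [norm_nonneg x₁, norm_nonneg x₂]
  have habs : ‖x₂‖ ^ 2 = s / 2 := by
    have := congrArg norm hprod
    rw [norm_mul, norm_mul] at this
    simp [Complex.norm_exp, Complex.norm_conj, abs_of_pos (half_pos hs), abs_of_pos hs, h0'] at this
    rw [sq, this]
  have h1eq : x₁ = x₂ * Complex.exp (2 * (π : ℂ) * Complex.I * (k : ℂ) / (n : ℂ)) := by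
    have hns : (Complex.normSq x₂ : ℂ) ≠ 0 := by
      simpa [Complex.normSq_eq_zero] using hx₂
    have hm : x₁ * ((starRingEnd ℂ) x₂ * x₂) = x₂ * Complex.exp ((θ : ℂ) * Complex.I) * (Complex.normSq x₂ : ℂ) := by
      rw [← mul_assoc, hprod]
      rw [← habs, Complex.sq_norm]
      push_cast
      ring
    have hcm : (starRingEnd ℂ) x₂ * x₂ = (Complex.normSq x₂ : ℂ) := by
      rw [mul_comm, Complex.mul_conj]
    rw [hcm] at hm
    have := mul_right_cancel₀ hns hm
    rw [this]
    congr 1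
    rw [hθ]
    push_cast
    ring_nf
  refine ⟨h1eq, ?_⟩
  set ζ := Complex.exp (2 * (π : ℂ) * Complex.I / (n : ℂ)) with hζ
  have hx1 : x₁ = ζ ^ (k : ℤ) * x₂ := by
    rw [h1eq, ← aux_exp_int n hn0 k]; ring
  have key : ∀ m : ℤ, ∃ j : ℕ, j < n ∧ (ζ : ℂ) ^ m = ζ ^ (j : ℤ) := by
    intro m
    refine ⟨(m % (n : ℤ)).toNat, ?_, ?_⟩
    · have h1 : m % (n : ℤ) < n := Int.emod_lt_of_pos m (by exact_mod_cast hn0)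
      have h2 : 0 ≤ m % (n : ℤ) := Int.emod_nonneg m (by exact_mod_cast hn0.ne')
      omega
    · rw [aux_zeta_mod n hn0 m]
      congr 1
      have h2 : 0 ≤ m % (n : ℤ) := Int.emod_nonneg m (by exact_mod_cast hn0.ne')
      omega
  have hz : ζ ≠ 0 := Complex.exp_ne_zero _
  have cast_exp : ∀ j : ℕ, Complex.exp (2 * (π : ℂ) * Complex.I * (j : ℂ) / (n : ℂ)) = ζ ^ (j : ℤ) := by
    intro j
    rw [← aux_exp_int n hn0 (j : ℤ)]
    norm_num
  ext z
  simp only [Set.mem_setOf_eq]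
  constructor
  · rintro ⟨j, hj, rfl⟩
    obtain ⟨j', hj', hj'eq⟩ := key ((j : ℤ) + k)
    refine ⟨j', hj', ?_⟩
    rw [cast_exp j, cast_exp j', ← hj'eq, hx1, zpow_add₀ hz]
    ring
  · rintro ⟨j, hj, rfl⟩
    obtain ⟨j', hj', hj'eq⟩ := key ((j : ℤ) - k)
    refine ⟨j', hj', ?_⟩
    rw [cast_exp j, cast_exp j', ← hj'eq, hx1, ← mul_assoc, ← zpow_add₀ hz]
    congr 2
    ring
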